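/- Let F be a field and 𝒜 the described 7-dimensional subalgebra of M_7(F). Let I be the subset of 𝒜 consisting of matrices whose only possibly nonzero entries are B[1,3]=b, B[1,7]=f, B[2,4]=b, B[6,7]=b for b, f ∈ F. Then I is a right ideal of 𝒜 but not a two-sided ideal of 𝒜. -/
import Mathlib

open Matrix in
private lemma cons_val_five' {α : Type*} (x : α) (u : Fin 6 → α) :
    vecCons x u 5 = vecHead (vecTail (vecTail (vecTail (vecTail u)))) := rfl

open Matrix in
private lemma vecTail_const {α : Type*} {n : ℕ} (c : α) :
    Matrix.vecTail (fun _ : Fin (n+1) => c) = fun _ : Fin n => c := rfl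

private lemma vecHead_const {α : Type*} {n : ℕ} (c : α) :
    Matrix.vecHead (fun _ : Fin (n+1) => c) = c := rfl

open Matrix in
private lemma cons_val_six' {α : Type*} (x : α) (u : Fin 6 → α) :
    vecCons x u 6 = vecHead (vecTail (vecTail (vecTail (vecTail (vecTail u))))) := rfl


/-- The generic element of the 7-dimensional subalgebra `𝒜` of `M₇(F)` from the paper:
diagonal `α`, first row `(α, a, b, c, d, e, f)`, and additional entries
`A[2,4] = b`, `A[2,7] = d`, `A[3,7] = e`, `A[5,7] = a`, `A[6,7] = b`. -/
def mat (F : Type*) [Field F] (α a b c d e f : F) : Matrix (Fin 7) (Fin 7) F :=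
  !![α, a, b, c, d, e, f;
     0, α, 0, b, 0, 0, d;
     0, 0, α, 0, 0, 0, e;
     0, 0, 0, α, 0, 0, 0;
     0, 0, 0, 0, α, 0, a;
     0, 0, 0, 0, 0, α, b;
     0, 0, 0, 0, 0, 0, α]

/-- The underlying set of the algebra `𝒜`. -/
def ASet (F : Type*) [Field F] : Set (Matrix (Fin 7) (Fin 7) F) :=
  {M | ∃ α a b c d e f : F, M = mat F α a b c d e f}

/-- The set `I`: matrices whose only possibly nonzero entries are
`B[1,3] = b`, `B[1,7] = f`, `B[2,4] = b`, `B[6,7] = b`; these are exactly the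
matrices `mat 0 0 b 0 0 0 f`. -/
def ISet (F : Type*) [Field F] : Set (Matrix (Fin 7) (Fin 7) F) :=
  {B | ∃ b f : F, B = mat F 0 0 b 0 0 0 f}


private lemma mat_add (F : Type*) [Field F] (b₁ f₁ b₂ f₂ : F) :
    mat F 0 0 b₁ 0 0 0 f₁ + mat F 0 0 b₂ 0 0 0 f₂ = mat F 0 0 (b₁ + b₂) 0 0 0 (f₁ + f₂) := by
  ext i j
  fin_cases i <;> fin_cases j <;>
    (first | rfl | (simp [mat, cons_val_five', cons_val_six'] <;>
      (first | rfl | simp [vecTail_const, vecHead_const])))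

private lemma mat_neg (F : Type*) [Field F] (b f : F) :
    -(mat F 0 0 b 0 0 0 f) = mat F 0 0 (-b) 0 0 0 (-f) := by
  ext i j
  fin_cases i <;> fin_cases j <;>
    (first | rfl | (simp [mat, cons_val_five', cons_val_six'] <;>
      (first | rfl | simp [vecTail_const, vecHead_const])))

set_option maxHeartbeats 1600000 in
private lemma mat_mul (F : Type*) [Field F] (b f α a b' c d e f' : F) :
    mat F 0 0 b 0 0 0 f * mat F α a b' c d e f' = mat F 0 0 (b * α) 0 0 0 (b * e + f * α) := by
  ext i j
  fin_cases i <;> fin_cases j <;>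
    (simp [mat, cons_val_five', cons_val_six', Matrix.mul_apply, Fin.sum_univ_seven] <;>
        (first | rfl | simp [vecTail_const, vecHead_const] | ring))

private lemma mat_counter (F : Type*) [Field F] :
    (mat F 0 1 0 0 0 0 0 * mat F 0 0 1 0 0 0 0) 0 3 = 1 := by
  simp [mat, cons_val_five', cons_val_six', Matrix.mul_apply, Fin.sum_univ_seven]

/-- `I` is a right ideal of `𝒜` but not a two-sided ideal of `𝒜`. -/
theorem stmt_16 (F : Type*) [Field F] :
    ISet F ⊆ ASet F ∧
    (0 : Matrix (Fin 7) (Fin 7) F) ∈ ISet F ∧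
    (∀ B₁ ∈ ISet F, ∀ B₂ ∈ ISet F, B₁ + B₂ ∈ ISet F) ∧
    (∀ B ∈ ISet F, -B ∈ ISet F) ∧
    (∀ B ∈ ISet F, ∀ A ∈ ASet F, B * A ∈ ISet F) ∧
    ¬ (∀ B ∈ ISet F, ∀ A ∈ ASet F, A * B ∈ ISet F) := by
  refine ⟨?_, ?_, ?_, ?_, ?_, ?_⟩
  · rintro B ⟨b, f, rfl⟩
    exact ⟨0, 0, b, 0, 0, 0, f, rfl⟩
  · exact ⟨0, 0, by ext i j; fin_cases i <;> fin_cases j <;> rfl⟩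
  · rintro B₁ ⟨b₁, f₁, rfl⟩ B₂ ⟨b₂, f₂, rfl⟩
    exact ⟨b₁ + b₂, f₁ + f₂, mat_add F b₁ f₁ b₂ f₂⟩
  · rintro B ⟨b, f, rfl⟩
    exact ⟨-b, -f, mat_neg F b f⟩
  · rintro B ⟨b, f, rfl⟩ A ⟨α, a, b', c, d, e, f', rfl⟩
    exact ⟨b * α, b * e + f * α, mat_mul F b f α a b' c d e f'⟩
  · intro h
    obtain ⟨b, f, hBf⟩ := h (mat F 0 0 1 0 0 0 0) ⟨1, 0, rfl⟩
      (mat F 0 1 0 0 0 0 0) ⟨0, 1, 0, 0, 0, 0, 0, rfl⟩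
    have h1 : (mat F 0 1 0 0 0 0 0 * mat F 0 0 1 0 0 0 0) 0 3 = 1 := mat_counter F
    rw [hBf] at h1
    have h0 : (mat F 0 0 b 0 0 0 f) 0 3 = 0 := rfl
    rw [h0] at h1
    exact one_ne_zero h1.symm
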